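/- Suppose conditions A and B both hold. Define û₁ ∈ ℝ^q by √n·û₁ = 𝒞₁₁^{-1}W(1) − (η/√n)·𝒞₁₁^{-1}Σ₁₁β₁* − (λ/(2√n))·𝒞₁₁^{-1}sign(β₁*), and define β̂ ∈ ℝ^p by β̂_j = (β₁*)_j + (û₁)_j for j ∈ {1,…,q} and β̂_j = 0 for j > q. Then there exists z ∈ ℝ^p with z_j = sign(β̂_j) = sign(β*_j) for j ≤ q and |z_j| ≤ 1 for all j, such that Xᵀy − (XᵀX + ηΣ)β̂ = (λ/2)z; consequently Σ^{1/2}β̂ is a global minimizer of the gEN criterion L. -/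

import Mathlib

open Matrix

/-- squared Euclidean norm -/
noncomputable def norm2sq {m : ℕ} (v : Fin m → ℝ) : ℝ := ∑ i, (v i) ^ 2

/-- ℓ¹ norm -/
noncomputable def norm1 {m : ℕ} (v : Fin m → ℝ) : ℝ := ∑ i, |v i|

/-- sign function -/
noncomputable def sgn (x : ℝ) : ℝ := if 0 < x then 1 else if x < 0 then -1 else 0

lemma sgn_mul_self (x : ℝ) : sgn x * x = |x| := by
  unfold sgn
  rcases lt_trichotomy 0 x with h | h | h
  · rw [if_pos h, one_mul, abs_of_pos h]
  · simp [← h]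
  · rw [if_neg (by linarith), if_pos h, abs_of_neg h]; ring

lemma abs_sgn_le (x : ℝ) : |sgn x| ≤ 1 := by
  unfold sgn
  rcases lt_trichotomy 0 x with h | h | h
  · simp [h]
  · simp [← h]
  · rw [if_neg (by linarith), if_pos h]; simp

lemma sgn_add_of_abs_lt {b u : ℝ} (h : |u| < |b|) : sgn (b + u) = sgn b := by
  rcases lt_trichotomy 0 b with hb | hb | hb
  · rw [abs_of_pos hb, abs_lt] at h
    unfold sgn
    rw [if_pos hb, if_pos (by linarith)]
  · simp [← hb, abs_lt] at h; linarith [abs_nonneg u, h]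
  · rw [abs_of_neg hb, abs_lt] at h
    unfold sgn
    rw [if_neg (by linarith : ¬ (0:ℝ) < b + u), if_pos (by linarith : b + u < 0),
      if_neg (by linarith : ¬ (0:ℝ) < b), if_pos hb]

lemma norm2sq_sub {m : ℕ} (a b : Fin m → ℝ) :
    norm2sq (a - b) = norm2sq a - 2 * (a ⬝ᵥ b) + norm2sq b := by
  simp only [norm2sq, dotProduct, Pi.sub_apply, Finset.mul_sum,
    ← Finset.sum_add_distrib, ← Finset.sum_sub_distrib]
  exact Finset.sum_congr rfl fun i _ => by ring

lemma sum_split {p q : ℕ} (hqp : q ≤ p) (hpq : q + (p - q) = p) (f : Fin p → ℝ) :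
    ∑ i, f i = (∑ j : Fin q, f (Fin.castLE hqp j))
      + ∑ j : Fin (p - q), f (Fin.cast hpq (Fin.natAdd q j)) := by
  calc ∑ i : Fin p, f i
      = ∑ i : Fin (q + (p - q)), f (Fin.cast hpq i) :=
        (Fintype.sum_equiv (finCongr hpq) _ _ (fun i => rfl)).symm
    _ = _ := by
        rw [Fin.sum_univ_add]
        exact congrArg₂ (· + ·)
          (Finset.sum_congr rfl fun j _ => congrArg f (Fin.ext (by simp))) rfl

lemma posDef_sub {p q : ℕ} (hqp : q ≤ p) (hpq : q + (p - q) = p)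
    (Sig : Matrix (Fin p) (Fin p) ℝ) (hSig : Sig.PosDef) :
    (Sig.submatrix (Fin.castLE hqp) (Fin.castLE hqp)).PosDef := by
  refine posDef_iff_dotProduct_mulVec.mpr ⟨hSig.isHermitian.submatrix _, fun x hx => ?_⟩
  have hstar : star x = x := funext fun i => star_trivial _
  rw [hstar]
  set xe : Fin p → ℝ := fun i => if h : (i : ℕ) < q then x ⟨i, h⟩ else 0 with hxe
  have hxe_c : ∀ j : Fin q, xe (Fin.castLE hqp j) = x j := by
    intro j
    simp only [hxe]
    rw [dif_pos (show ((Fin.castLE hqp j : Fin p) : ℕ) < q from j.isLt)]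
    exact congrArg x (Fin.ext rfl)
  have hxe_n : ∀ j : Fin (p - q), xe (Fin.cast hpq (Fin.natAdd q j)) = 0 := by
    intro j
    simp only [hxe]
    rw [dif_neg]
    simp [Fin.natAdd]
  have hxe0 : xe ≠ 0 := by
    intro h0
    apply hx
    funext j
    have := congrFun h0 (Fin.castLE hqp j)
    rw [hxe_c j] at this
    exact this
  have key : x ⬝ᵥ ((Sig.submatrix (Fin.castLE hqp) (Fin.castLE hqp)) *ᵥ x)
      = xe ⬝ᵥ (Sig *ᵥ xe) := by
    simp only [dotProduct, mulVec, dotProduct]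
    rw [sum_split hqp hpq (f := fun i => xe i * ∑ k, Sig i k * xe k)]
    have h2 : ∀ j : Fin (p - q),
        xe (Fin.cast hpq (Fin.natAdd q j)) * ∑ k, Sig (Fin.cast hpq (Fin.natAdd q j)) k * xe k = 0 := by
      intro j; rw [hxe_n j, zero_mul]
    rw [Finset.sum_congr rfl (fun j _ => h2 j), Finset.sum_const_zero, add_zero]
    refine Finset.sum_congr rfl fun j _ => ?_
    rw [hxe_c j]
    congr 1
    rw [sum_split hqp hpq (f := fun k => Sig (Fin.castLE hqp j) k * xe k)]
    have h3 : ∀ k : Fin (p - q),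
        Sig (Fin.castLE hqp j) (Fin.cast hpq (Fin.natAdd q k)) * xe (Fin.cast hpq (Fin.natAdd q k)) = 0 := by
      intro k; rw [hxe_n k, mul_zero]
    rw [Finset.sum_congr rfl (fun k _ => h3 k), Finset.sum_const_zero, add_zero]
    exact Finset.sum_congr rfl fun k _ => by rw [Matrix.submatrix_apply, hxe_c k]
  rw [key]
  have := hSig.dotProduct_mulVec_pos hxe0
  rwa [show star xe = xe from funext fun i => star_trivial _] at this

lemma abs_sub_sub_le (a b c : ℝ) : |a - b - c| ≤ |a| + |b| + |c| := by
  have h1 : |a - b| ≤ |a| + |b| := by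
    rw [sub_eq_add_neg]; exact (abs_add_le _ _).trans (by rw [abs_neg])
  have h2 : |a - b - c| ≤ |a - b| + |c| := by
    rw [sub_eq_add_neg (a - b)]; exact (abs_add_le _ _).trans (by rw [abs_neg])
  linarith

lemma posSemidef_smul' {m : ℕ} {A : Matrix (Fin m) (Fin m) ℝ} (hA : A.PosSemidef)
    {c : ℝ} (hc : 0 ≤ c) : (c • A).PosSemidef := by
  refine posSemidef_iff_dotProduct_mulVec.mpr ⟨?_, ?_⟩
  · show (c • A)ᴴ = c • A
    rw [Matrix.conjTranspose_smul, star_trivial, hA.1]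
  · intro x
    rw [Matrix.smul_mulVec, dotProduct_smul, smul_eq_mul]
    exact mul_nonneg hc (hA.dotProduct_mulVec_nonneg x)

lemma posDef_smul' {m : ℕ} {A : Matrix (Fin m) (Fin m) ℝ} (hA : A.PosDef)
    {c : ℝ} (hc : 0 < c) : (c • A).PosDef := by
  refine posDef_iff_dotProduct_mulVec.mpr ⟨?_, ?_⟩
  · show (c • A)ᴴ = c • A
    rw [Matrix.conjTranspose_smul, star_trivial, hA.1]
  · intro x hx
    rw [Matrix.smul_mulVec, dotProduct_smul, smul_eq_mul]
    exact mul_pos hc (hA.dotProduct_mulVec_pos hx)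

lemma real_conjTranspose_eq {m k : ℕ} (A : Matrix (Fin m) (Fin k) ℝ) : Aᴴ = Aᵀ := by
  ext i j; simp [Matrix.conjTranspose_apply]

set_option maxHeartbeats 2000000 in
/-- Under conditions A and B, with û₁ defined by the explicit formula and β̂ the vector
    equal to β₁* + û₁ on the first q coordinates and 0 afterwards, there exists z with
    z_j = sign(β̂_j) = sign(β*_j) for j ≤ q and |z_j| ≤ 1 for all j such that
    Xᵀy − (XᵀX + ηΣ)β̂ = (λ/2)z; consequently Σ^{1/2}β̂ globally minimizes the gEN
    criterion L. -/
theorem stmt6 (n p q : ℕ) (hn : 1 ≤ n) (hq : 1 ≤ q) (hqp : q ≤ p)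
    (X : Matrix (Fin n) (Fin p) ℝ) (eps : Fin n → ℝ)
    (betastar : Fin p → ℝ)
    (hbeta1 : ∀ j : Fin p, (j : ℕ) < q → betastar j ≠ 0)
    (hbeta2 : ∀ j : Fin p, q ≤ (j : ℕ) → betastar j = 0)
    (y : Fin n → ℝ) (hy : y = X.mulVec betastar + eps)
    (Sig : Matrix (Fin p) (Fin p) ℝ) (hSig : Sig.PosDef)
    -- R is the symmetric positive definite square root Σ^{1/2}, so Σ^{-1/2} = R⁻¹
    (R : Matrix (Fin p) (Fin p) ℝ) (hR : R.PosDef) (hRR : R * R = Sig)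
    (lam eta : ℝ) (hlam : 0 < lam) (heta : 0 < eta)
    (L : (Fin p → ℝ) → ℝ)
    (hL : ∀ bt, L bt =
      norm2sq (fun i => y i - X.mulVec (R⁻¹.mulVec bt) i)
        + lam * norm1 (R⁻¹.mulVec bt) + eta * norm2sq bt)
    (X1 : Matrix (Fin n) (Fin q) ℝ) (hX1 : X1 = X.submatrix id (Fin.castLE hqp))
    (X2 : Matrix (Fin n) (Fin (p - q)) ℝ)
    (hX2 : X2 = X.submatrix id
      (fun j => Fin.cast (by omega : q + (p - q) = p) (Fin.natAdd q j)))
    (Sig11 : Matrix (Fin q) (Fin q) ℝ)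
    (hSig11 : Sig11 = Sig.submatrix (Fin.castLE hqp) (Fin.castLE hqp))
    (Sig21 : Matrix (Fin (p - q)) (Fin q) ℝ)
    (hSig21 : Sig21 = Sig.submatrix
      (fun j => Fin.cast (by omega : q + (p - q) = p) (Fin.natAdd q j)) (Fin.castLE hqp))
    (beta1 : Fin q → ℝ) (hbeta1q : beta1 = fun j => betastar (Fin.castLE hqp j))
    (C11 : Matrix (Fin q) (Fin q) ℝ) (hC11 : C11 = ((n : ℝ)⁻¹) • (X1ᵀ * X1))
    (C21 : Matrix (Fin (p - q)) (Fin q) ℝ) (hC21 : C21 = ((n : ℝ)⁻¹) • (X2ᵀ * X1))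
    (W1 : Fin q → ℝ) (hW1 : W1 = ((Real.sqrt n)⁻¹) • X1ᵀ.mulVec eps)
    (W2 : Fin (p - q) → ℝ) (hW2 : W2 = ((Real.sqrt n)⁻¹) • X2ᵀ.mulVec eps)
    (CC11 : Matrix (Fin q) (Fin q) ℝ) (hCC11 : CC11 = C11 + (eta / n) • Sig11)
    (CC21 : Matrix (Fin (p - q)) (Fin q) ℝ) (hCC21 : CC21 = C21 + (eta / n) • Sig21)
    -- definition of û₁
    (uhat1 : Fin q → ℝ)
    (huhat1 : Real.sqrt n • uhat1
      = CC11⁻¹.mulVec W1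
        - (eta / Real.sqrt n) • CC11⁻¹.mulVec (Sig11.mulVec beta1)
        - (lam / (2 * Real.sqrt n)) • CC11⁻¹.mulVec fun j => sgn (beta1 j))
    -- condition A
    (hA : ∀ j : Fin q,
      |CC11⁻¹.mulVec W1 j| < Real.sqrt n *
        (|beta1 j| - (lam / (2 * n)) * |(CC11⁻¹.mulVec fun k => sgn (beta1 k)) j|
          - (eta / n) * |CC11⁻¹.mulVec (Sig11.mulVec beta1) j|))
    -- condition B
    (hB : ∀ j : Fin (p - q),
      |(CC21 * CC11⁻¹).mulVec W1 j - W2 j| ≤ lam / (2 * Real.sqrt n)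
        - (lam / (2 * Real.sqrt n)) *
          |((CC21 * CC11⁻¹).mulVec
              ((fun k => sgn (beta1 k)) + (2 * eta / lam) • Sig11.mulVec beta1)
            - (2 * eta / lam) • Sig21.mulVec beta1) j|)
    -- definition of β̂
    (bhat : Fin p → ℝ)
    (hbhat1 : ∀ j : Fin q, bhat (Fin.castLE hqp j) = beta1 j + uhat1 j)
    (hbhat2 : ∀ j : Fin p, q ≤ (j : ℕ) → bhat j = 0) :
    ∃ z : Fin p → ℝ,
      (∀ j : Fin q, z (Fin.castLE hqp j) = sgn (bhat (Fin.castLE hqp j)) ∧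
        sgn (bhat (Fin.castLE hqp j)) = sgn (betastar (Fin.castLE hqp j))) ∧
      (∀ j : Fin p, |z j| ≤ 1) ∧
      Xᵀ.mulVec y - (Xᵀ * X + eta • Sig).mulVec bhat = (lam / 2) • z ∧
      (∀ b : Fin p → ℝ, L (R.mulVec bhat) ≤ L b) := by
  -- basic scalar facts
  have hn0 : (0:ℝ) < (n:ℝ) := by exact_mod_cast hn
  have hnne : (n:ℝ) ≠ 0 := ne_of_gt hn0
  have hlamne : lam ≠ 0 := ne_of_gt hlam
  set s : ℝ := Real.sqrt n with hs_def
  have hs : 0 < s := Real.sqrt_pos.mpr hn0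
  have hsne : s ≠ 0 := ne_of_gt hs
  have hss : s * s = (n:ℝ) := Real.mul_self_sqrt hn0.le
  have hpq : q + (p - q) = p := by omega
  set e2 : Fin (p - q) → Fin p := fun j => Fin.cast hpq (Fin.natAdd q j) with he2
  -- pointwise descriptions of the blocks
  have hX1a : ∀ i j, X1 i j = X i (Fin.castLE hqp j) := fun i j => by rw [hX1]; rfl
  have hX2a : ∀ i j, X2 i j = X i (e2 j) := fun i j => by rw [hX2]; rfl
  have hS11a : ∀ i j, Sig11 i j = Sig (Fin.castLE hqp i) (Fin.castLE hqp j) :=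
    fun i j => by rw [hSig11]; rfl
  have hS21a : ∀ i j, Sig21 i j = Sig (e2 i) (Fin.castLE hqp j) := fun i j => by rw [hSig21]; rfl
  have hb1a : ∀ j, beta1 j = betastar (Fin.castLE hqp j) := fun j => by rw [hbeta1q]
  have he2q : ∀ j : Fin (p - q), q ≤ ((e2 j : Fin p) : ℕ) := by
    intro j; simp only [he2, Fin.coe_cast, Fin.coe_natAdd]; omega
  have hbse : ∀ j, betastar (e2 j) = 0 := fun j => hbeta2 _ (he2q j)
  have hbhe : ∀ j, bhat (e2 j) = 0 := fun j => hbhat2 _ (he2q j)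
  set u : Fin q → ℝ := beta1 + uhat1 with hu
  have hbhc : ∀ j : Fin q, bhat (Fin.castLE hqp j) = u j := fun j => hbhat1 j
  -- block mulVec facts
  have hXbh : X.mulVec bhat = X1.mulVec u := by
    funext i
    simp only [mulVec, dotProduct]
    rw [sum_split hqp hpq (f := fun k => X i k * bhat k)]
    rw [Finset.sum_congr rfl (fun j _ => by rw [show Fin.cast hpq (Fin.natAdd q j) = e2 j from rfl,
      hbhe j, mul_zero] : ∀ j ∈ Finset.univ, X i (Fin.cast hpq (Fin.natAdd q j))
        * bhat (Fin.cast hpq (Fin.natAdd q j)) = 0), Finset.sum_const_zero, add_zero]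
    exact Finset.sum_congr rfl fun j _ => by rw [hX1a i j, hbhc j]
  have hXbs : X.mulVec betastar = X1.mulVec beta1 := by
    funext i
    simp only [mulVec, dotProduct]
    rw [sum_split hqp hpq (f := fun k => X i k * betastar k)]
    rw [Finset.sum_congr rfl (fun j _ => by rw [show Fin.cast hpq (Fin.natAdd q j) = e2 j from rfl,
      hbse j, mul_zero] : ∀ j ∈ Finset.univ, X i (Fin.cast hpq (Fin.natAdd q j))
        * betastar (Fin.cast hpq (Fin.natAdd q j)) = 0), Finset.sum_const_zero, add_zero]
    exact Finset.sum_congr rfl fun j _ => by rw [hX1a i j, hb1a j]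
  have hXt1 : ∀ (v : Fin n → ℝ) (j : Fin q), Xᵀ.mulVec v (Fin.castLE hqp j) = X1ᵀ.mulVec v j := by
    intro v j
    simp only [mulVec, dotProduct, transpose_apply]
    exact Finset.sum_congr rfl fun i _ => by rw [hX1a i j]
  have hXt2 : ∀ (v : Fin n → ℝ) (j : Fin (p - q)), Xᵀ.mulVec v (e2 j) = X2ᵀ.mulVec v j := by
    intro v j
    simp only [mulVec, dotProduct, transpose_apply]
    exact Finset.sum_congr rfl fun i _ => by rw [hX2a i j]
  have hSigbh1 : ∀ j : Fin q, Sig.mulVec bhat (Fin.castLE hqp j) = Sig11.mulVec u j := by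
    intro j
    simp only [mulVec, dotProduct]
    rw [sum_split hqp hpq (f := fun k => Sig (Fin.castLE hqp j) k * bhat k)]
    rw [Finset.sum_congr rfl (fun k _ => by rw [show Fin.cast hpq (Fin.natAdd q k) = e2 k from rfl,
      hbhe k, mul_zero] : ∀ k ∈ Finset.univ, Sig (Fin.castLE hqp j) (Fin.cast hpq (Fin.natAdd q k))
        * bhat (Fin.cast hpq (Fin.natAdd q k)) = 0), Finset.sum_const_zero, add_zero]
    exact Finset.sum_congr rfl fun k _ => by rw [hS11a j k, hbhc k]
  have hSigbh2 : ∀ j : Fin (p - q), Sig.mulVec bhat (e2 j) = Sig21.mulVec u j := by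
    intro j
    simp only [mulVec, dotProduct]
    rw [sum_split hqp hpq (f := fun k => Sig (e2 j) k * bhat k)]
    rw [Finset.sum_congr rfl (fun k _ => by rw [show Fin.cast hpq (Fin.natAdd q k) = e2 k from rfl,
      hbhe k, mul_zero] : ∀ k ∈ Finset.univ, Sig (e2 j) (Fin.cast hpq (Fin.natAdd q k))
        * bhat (Fin.cast hpq (Fin.natAdd q k)) = 0), Finset.sum_const_zero, add_zero]
    exact Finset.sum_congr rfl fun k _ => by rw [hS21a j k, hbhc k]
  -- the residual vector
  set res : Fin p → ℝ := Xᵀ.mulVec y - (Xᵀ * X + eta • Sig).mulVec bhat with hres0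
  have hres : res = Xᵀ.mulVec (X1.mulVec beta1) + Xᵀ.mulVec eps
      - Xᵀ.mulVec (X1.mulVec u) - eta • Sig.mulVec bhat := by
    rw [hres0, add_mulVec, smul_mulVec, ← mulVec_mulVec, hXbh, hy, hXbs, mulVec_add]
    abel
  have hres1 : ∀ j : Fin q, res (Fin.castLE hqp j)
      = X1ᵀ.mulVec eps j - (X1ᵀ * X1).mulVec uhat1 j
        - eta * Sig11.mulVec beta1 j - eta * Sig11.mulVec uhat1 j := by
    intro j
    rw [hres]
    simp only [Pi.add_apply, Pi.sub_apply, Pi.smul_apply, smul_eq_mul]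
    rw [hXt1 _ j, hXt1 _ j, hXt1 _ j, hSigbh1 j]
    rw [mulVec_mulVec, mulVec_mulVec, show (X1ᵀ * X1).mulVec u
      = (X1ᵀ * X1).mulVec beta1 + (X1ᵀ * X1).mulVec uhat1 from by rw [hu, mulVec_add],
      show Sig11.mulVec u = Sig11.mulVec beta1 + Sig11.mulVec uhat1 from by rw [hu, mulVec_add]]
    simp only [Pi.add_apply]
    ring
  have hres2 : ∀ j : Fin (p - q), res (e2 j)
      = X2ᵀ.mulVec eps j - (X2ᵀ * X1).mulVec uhat1 j
        - eta * Sig21.mulVec beta1 j - eta * Sig21.mulVec uhat1 j := by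
    intro j
    rw [hres]
    simp only [Pi.add_apply, Pi.sub_apply, Pi.smul_apply, smul_eq_mul]
    rw [hXt2 _ j, hXt2 _ j, hXt2 _ j, hSigbh2 j]
    rw [mulVec_mulVec, mulVec_mulVec, show (X2ᵀ * X1).mulVec u
      = (X2ᵀ * X1).mulVec beta1 + (X2ᵀ * X1).mulVec uhat1 from by rw [hu, mulVec_add],
      show Sig21.mulVec u = Sig21.mulVec beta1 + Sig21.mulVec uhat1 from by rw [hu, mulVec_add]]
    simp only [Pi.add_apply]
    ring
  -- positive definiteness and invertibility of CC11
  have hSig11pd : Sig11.PosDef := by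
    rw [hSig11]; exact posDef_sub hqp hpq Sig hSig
  have hC11psd : C11.PosSemidef := by
    rw [hC11]
    refine posSemidef_smul' ?_ (by positivity)
    have := Matrix.posSemidef_conjTranspose_mul_self X1
    rwa [real_conjTranspose_eq] at this
  have hCC11pd : CC11.PosDef := by
    rw [hCC11]
    exact Matrix.PosDef.posSemidef_add hC11psd (posDef_smul' hSig11pd (by positivity))
  have hdet : IsUnit CC11.det := hCC11pd.det_pos.ne'.isUnit
  have hinv : CC11 * CC11⁻¹ = 1 := Matrix.mul_nonsing_inv _ hdet
  set sg : Fin q → ℝ := fun j => sgn (beta1 j) with hsg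
  -- first-block stationarity
  have step1 : CC11.mulVec (s • uhat1)
      = W1 - (eta / s) • Sig11.mulVec beta1 - (lam / (2 * s)) • sg := by
    rw [huhat1]
    simp only [mulVec_sub, mulVec_smul, mulVec_mulVec, ← Matrix.mul_assoc, hinv,
      Matrix.one_mul, one_mulVec]
  have step2 : (n:ℝ) • CC11.mulVec uhat1
      = s • W1 - eta • Sig11.mulVec beta1 - (lam / 2) • sg := by
    have c1 : s * (eta / s) = eta := by field_simp
    have c2 : s * (lam / (2 * s)) = lam / 2 := by field_simp
    calc (n:ℝ) • CC11.mulVec uhat1 = s • CC11.mulVec (s • uhat1) := by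
          rw [mulVec_smul, smul_smul, hss]
      _ = s • (W1 - (eta / s) • Sig11.mulVec beta1 - (lam / (2 * s)) • sg) := by rw [step1]
      _ = _ := by rw [smul_sub, smul_sub, smul_smul, smul_smul, c1, c2]
  have step3 : (n:ℝ) • CC11.mulVec uhat1
      = (X1ᵀ * X1).mulVec uhat1 + eta • Sig11.mulVec uhat1 := by
    rw [hCC11, add_mulVec, smul_add, hC11, smul_mulVec, smul_mulVec,
      smul_smul, smul_smul, mul_inv_cancel₀ hnne,
      show (n:ℝ) * (eta / n) = eta from by field_simp, one_smul]
  have step4 : s • W1 = X1ᵀ.mulVec eps := by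
    rw [hW1, smul_smul, mul_inv_cancel₀ hsne, one_smul]
  have eqA : (X1ᵀ * X1).mulVec uhat1 + eta • Sig11.mulVec uhat1
      = X1ᵀ.mulVec eps - eta • Sig11.mulVec beta1 - (lam / 2) • sg := by
    rw [← step3, step2, step4]
  have hresc : ∀ j : Fin q, res (Fin.castLE hqp j) = (lam / 2) * sg j := by
    intro j
    have h := congrFun eqA j
    simp only [Pi.add_apply, Pi.sub_apply, Pi.smul_apply, smul_eq_mul] at h
    rw [hres1 j]
    linarith
  -- second-block computation
  set M : Matrix (Fin (p - q)) (Fin q) ℝ := CC21 * CC11⁻¹ with hM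
  have step1' : CC21.mulVec (s • uhat1)
      = M.mulVec W1 - (eta / s) • M.mulVec (Sig11.mulVec beta1)
        - (lam / (2 * s)) • M.mulVec sg := by
    rw [huhat1]
    simp only [mulVec_sub, mulVec_smul, mulVec_mulVec, hM, ← Matrix.mul_assoc]
  have step2' : (n:ℝ) • CC21.mulVec uhat1
      = s • M.mulVec W1 - eta • M.mulVec (Sig11.mulVec beta1)
        - (lam / 2) • M.mulVec sg := by
    have c1 : s * (eta / s) = eta := by field_simp
    have c2 : s * (lam / (2 * s)) = lam / 2 := by field_simp
    calc (n:ℝ) • CC21.mulVec uhat1 = s • CC21.mulVec (s • uhat1) := by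
          rw [mulVec_smul, smul_smul, hss]
      _ = s • (M.mulVec W1 - (eta / s) • M.mulVec (Sig11.mulVec beta1)
            - (lam / (2 * s)) • M.mulVec sg) := by rw [step1']
      _ = _ := by rw [smul_sub, smul_sub, smul_smul, smul_smul, c1, c2]
  have step3' : (n:ℝ) • CC21.mulVec uhat1
      = (X2ᵀ * X1).mulVec uhat1 + eta • Sig21.mulVec uhat1 := by
    rw [hCC21, add_mulVec, smul_add, hC21, smul_mulVec, smul_mulVec,
      smul_smul, smul_smul, mul_inv_cancel₀ hnne,
      show (n:ℝ) * (eta / n) = eta from by field_simp, one_smul]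
  have step4' : s • W2 = X2ᵀ.mulVec eps := by
    rw [hW2, smul_smul, mul_inv_cancel₀ hsne, one_smul]
  have eqB : (X2ᵀ * X1).mulVec uhat1 + eta • Sig21.mulVec uhat1
      = s • M.mulVec W1 - eta • M.mulVec (Sig11.mulVec beta1)
        - (lam / 2) • M.mulVec sg := by
    rw [← step3', step2']
  set bb : Fin (p - q) → ℝ :=
    M.mulVec (sg + (2 * eta / lam) • Sig11.mulVec beta1)
      - (2 * eta / lam) • Sig21.mulVec beta1 with hbb
  have hres2' : ∀ j : Fin (p - q),
      res (e2 j) = -(s * (M.mulVec W1 j - W2 j)) + (lam / 2) * bb j := by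
    intro j
    have h := congrFun eqB j
    simp only [Pi.add_apply, Pi.sub_apply, Pi.smul_apply, smul_eq_mul] at h
    have h4 := congrFun step4' j
    simp only [Pi.smul_apply, smul_eq_mul] at h4
    have hbbj : bb j = M.mulVec sg j + (2 * eta / lam) * M.mulVec (Sig11.mulVec beta1) j
        - (2 * eta / lam) * Sig21.mulVec beta1 j := by
      rw [hbb]
      simp only [mulVec_add, mulVec_smul, Pi.sub_apply, Pi.add_apply, Pi.smul_apply, smul_eq_mul]
    have hbbj2 : lam / 2 * bb j = lam / 2 * (M *ᵥ sg) j
        + eta * (M *ᵥ Sig11 *ᵥ beta1) j - eta * (Sig21 *ᵥ beta1) j := by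
      rw [hbbj]; field_simp
    have hexp : s * ((M *ᵥ W1) j - W2 j) = s * (M *ᵥ W1) j - s * W2 j := by ring
    rw [hres2 j]
    linarith [hbbj2, hexp, h, h4]
  have hresb : ∀ j : Fin (p - q), |res (e2 j)| ≤ lam / 2 := by
    intro j
    rw [hres2' j]
    have hBj := hB j
    have h1 : |-(s * (M.mulVec W1 j - W2 j)) + lam / 2 * bb j|
        ≤ s * |M.mulVec W1 j - W2 j| + lam / 2 * |bb j| := by
      calc |-(s * (M.mulVec W1 j - W2 j)) + lam / 2 * bb j|
          ≤ |-(s * (M.mulVec W1 j - W2 j))| + |lam / 2 * bb j| := abs_add_le _ _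
        _ = _ := by
            rw [abs_neg, abs_mul, abs_mul, abs_of_pos hs,
              abs_of_pos (by linarith : (0:ℝ) < lam / 2)]
    have h2 : s * |M.mulVec W1 j - W2 j|
        ≤ s * (lam / (2 * s) - lam / (2 * s) * |bb j|) :=
      mul_le_mul_of_nonneg_left hBj hs.le
    have h3 : s * (lam / (2 * s) - lam / (2 * s) * |bb j|)
        = lam / 2 - lam / 2 * |bb j| := by field_simp
    rw [h3] at h2
    linarith
  -- condition A implies |uhat1 j| < |beta1 j|
  have hAlt : ∀ j : Fin q, |uhat1 j| < |beta1 j| := by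
    intro j
    have h := congrFun huhat1 j
    simp only [Pi.smul_apply, Pi.sub_apply, smul_eq_mul] at h
    have hAj := hA j
    have c1 : eta / s = s * (eta / n) := by
      rw [← hss]; field_simp
    have c2 : lam / (2 * s) = s * (lam / (2 * n)) := by
      rw [← hss]; field_simp
    have h5 : |s * uhat1 j| ≤ |(CC11⁻¹ *ᵥ W1) j| + eta / s * |(CC11⁻¹ *ᵥ Sig11 *ᵥ beta1) j|
        + lam / (2 * s) * |(CC11⁻¹ *ᵥ sg) j| := by
      rw [h]
      have := abs_sub_sub_le ((CC11⁻¹ *ᵥ W1) j) (eta / s * (CC11⁻¹ *ᵥ Sig11 *ᵥ beta1) j)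
        (lam / (2 * s) * (CC11⁻¹ *ᵥ sg) j)
      rw [abs_mul, abs_mul, abs_of_pos (by positivity : (0:ℝ) < eta / s),
        abs_of_pos (by positivity : (0:ℝ) < lam / (2 * s))] at this
      linarith
    have hAj' : |(CC11⁻¹ *ᵥ W1) j| < s * |beta1 j| - s * (lam / (2 * n)) * |(CC11⁻¹ *ᵥ sg) j|
        - s * (eta / n) * |(CC11⁻¹ *ᵥ Sig11 *ᵥ beta1) j| := by
      rw [mul_sub, mul_sub] at hAj
      linarith [hAj]
    rw [c1, c2] at h5
    have habs : s * |uhat1 j| < s * |beta1 j| := by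
      rw [← abs_of_pos hs, ← abs_mul, abs_of_pos hs]
      linarith
    exact lt_of_mul_lt_mul_left habs hs.le
  have hsgneq : ∀ j : Fin q, sgn (bhat (Fin.castLE hqp j)) = sgn (beta1 j) := by
    intro j
    rw [hbhat1 j]
    exact sgn_add_of_abs_lt (hAlt j)
  -- the subgradient vector
  set z : Fin p → ℝ := fun i => 2 / lam * res i with hz
  have hzc : ∀ j : Fin q, z (Fin.castLE hqp j) = sgn (beta1 j) := by
    intro j
    show 2 / lam * res (Fin.castLE hqp j) = sgn (beta1 j)
    rw [hresc j]
    show 2 / lam * (lam / 2 * sgn (beta1 j)) = sgn (beta1 j)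
    field_simp
  have hzabs : ∀ i : Fin p, |z i| ≤ 1 := by
    intro i
    rcases lt_or_ge (i : ℕ) q with hlt | hge
    · have hi : i = Fin.castLE hqp ⟨(i : ℕ), hlt⟩ := Fin.ext rfl
      rw [hi, hzc ⟨(i : ℕ), hlt⟩]
      exact abs_sgn_le _
    · have hi : i = e2 ⟨(i : ℕ) - q, by omega⟩ := by
        refine Fin.ext ?_
        simp only [he2, Fin.coe_cast, Fin.coe_natAdd]
        omega
      rw [hi]
      show |2 / lam * res (e2 _)| ≤ 1
      rw [abs_mul, abs_of_pos (by positivity : (0:ℝ) < 2 / lam)]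
      have := hresb ⟨(i : ℕ) - q, by omega⟩
      calc 2 / lam * |res (e2 ⟨(i : ℕ) - q, by omega⟩)| ≤ 2 / lam * (lam / 2) :=
            mul_le_mul_of_nonneg_left this (by positivity)
        _ = 1 := by field_simp
  have hgrad : res = (lam / 2) • z := by
    funext i
    show res i = lam / 2 * (2 / lam * res i)
    field_simp
  refine ⟨z, fun j => ⟨by rw [hzc j, hsgneq j], by rw [hsgneq j, hb1a j]⟩, hzabs, hgrad, ?_⟩
  -- global minimality
  intro b
  rw [hL, hL]
  have hRdet : IsUnit R.det := hR.det_pos.ne'.isUnit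
  have hA1 : R⁻¹.mulVec (R.mulVec bhat) = bhat := by
    rw [mulVec_mulVec, Matrix.nonsing_inv_mul R hRdet, one_mulVec]
  set beta : Fin p → ℝ := R⁻¹.mulVec b with hbeta
  have hb_rec : R.mulVec beta = b := by
    rw [hbeta, mulVec_mulVec, Matrix.mul_nonsing_inv R hRdet, one_mulVec]
  have hRsym : Rᵀ = R := by
    ext i j
    have h := congrFun (congrFun hR.isHermitian i) j
    simpa [Matrix.conjTranspose_apply, Matrix.transpose_apply] using h
  have hSsym : Sigᵀ = Sig := by
    ext i j
    have h := congrFun (congrFun hSig.isHermitian i) j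
    simpa [Matrix.conjTranspose_apply, Matrix.transpose_apply] using h
  have hnorm2R : ∀ w : Fin p → ℝ, norm2sq (R.mulVec w) = w ⬝ᵥ Sig.mulVec w := by
    intro w
    have h0 : norm2sq (R.mulVec w) = (R.mulVec w) ⬝ᵥ (R.mulVec w) := by
      simp [norm2sq, dotProduct, sq]
    rw [h0, dotProduct_mulVec, ← mulVec_transpose, hRsym, mulVec_mulVec, hRR]
    exact dotProduct_comm _ _
  have hfun : ∀ w : Fin p → ℝ, (fun i => y i - X.mulVec w i) = y - X.mulVec w := fun w => rfl
  rw [hA1, hnorm2R bhat, ← hb_rec, hnorm2R beta, hfun bhat, hfun beta]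
  set dl : Fin p → ℝ := beta - bhat with hdl
  set r : Fin n → ℝ := y - X.mulVec bhat with hr
  have He1 : norm2sq (y - X.mulVec beta) = norm2sq r - 2 * (r ⬝ᵥ X.mulVec dl)
      + norm2sq (X.mulVec dl) := by
    have h' : y - X.mulVec beta = r - X.mulVec dl := by
      rw [hr, hdl, mulVec_sub]; abel
    rw [h', norm2sq_sub]
  have He2 : beta ⬝ᵥ Sig.mulVec beta = bhat ⬝ᵥ Sig.mulVec bhat
      + 2 * (dl ⬝ᵥ Sig.mulVec bhat) + dl ⬝ᵥ Sig.mulVec dl := by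
    have hbeta' : beta = bhat + dl := by rw [hdl]; abel
    rw [hbeta', mulVec_add, dotProduct_add, add_dotProduct, add_dotProduct]
    have hsym2 : bhat ⬝ᵥ Sig.mulVec dl = dl ⬝ᵥ Sig.mulVec bhat := by
      rw [dotProduct_mulVec, ← mulVec_transpose, hSsym]
      exact dotProduct_comm _ _
    rw [hsym2]; ring
  have He3 : r ⬝ᵥ X.mulVec dl = (Xᵀ.mulVec r) ⬝ᵥ dl := by
    rw [dotProduct_mulVec, ← mulVec_transpose]
  have hres' : res = Xᵀ.mulVec r - eta • Sig.mulVec bhat := by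
    rw [hres0, hr, mulVec_sub, add_mulVec, smul_mulVec, mulVec_mulVec]
    abel
  have He4 : Xᵀ.mulVec r = (lam / 2) • z + eta • Sig.mulVec bhat := by
    have h' : Xᵀ.mulVec r = res + eta • Sig.mulVec bhat := by rw [hres']; abel
    rw [h', hgrad]
  have He5 : z ⬝ᵥ bhat = norm1 bhat := by
    simp only [dotProduct, norm1]
    refine Finset.sum_congr rfl fun i _ => ?_
    rcases lt_or_ge (i : ℕ) q with hlt | hge
    · have hi : i = Fin.castLE hqp ⟨(i : ℕ), hlt⟩ := Fin.ext rfl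
      rw [hi, hzc ⟨(i : ℕ), hlt⟩, ← hsgneq ⟨(i : ℕ), hlt⟩, sgn_mul_self]
    · rw [hbhat2 i hge, mul_zero, abs_zero]
  have He6 : z ⬝ᵥ beta ≤ norm1 beta := by
    simp only [dotProduct, norm1]
    refine Finset.sum_le_sum fun i _ => ?_
    calc z i * beta i ≤ |z i * beta i| := le_abs_self _
      _ = |z i| * |beta i| := abs_mul _ _
      _ ≤ 1 * |beta i| := mul_le_mul_of_nonneg_right (hzabs i) (abs_nonneg _)
      _ = |beta i| := one_mul _
  have He7 : 0 ≤ norm2sq (X.mulVec dl) := by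
    simp only [norm2sq]
    exact Finset.sum_nonneg fun i _ => sq_nonneg _
  have He8 : 0 ≤ dl ⬝ᵥ Sig.mulVec dl := by
    have h' := hSig.posSemidef.dotProduct_mulVec_nonneg dl
    rwa [show star dl = dl from funext fun i => star_trivial _] at h'
  have hdot : r ⬝ᵥ X.mulVec dl = lam / 2 * (z ⬝ᵥ beta) - lam / 2 * (z ⬝ᵥ bhat)
      + eta * (dl ⬝ᵥ Sig.mulVec bhat) := by
    rw [He3, He4, add_dotProduct, smul_dotProduct, smul_dotProduct, smul_eq_mul, smul_eq_mul,
      hdl, sub_dotProduct, dotProduct_comm (Sig *ᵥ bhat) (beta - bhat), sub_dotProduct,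
      dotProduct_sub]
    ring
  have key1 : lam * (z ⬝ᵥ beta) ≤ lam * norm1 beta := mul_le_mul_of_nonneg_left He6 hlam.le
  have e2' : eta * (beta ⬝ᵥ Sig.mulVec beta) = eta * (bhat ⬝ᵥ Sig.mulVec bhat)
      + 2 * eta * (dl ⬝ᵥ Sig.mulVec bhat) + eta * (dl ⬝ᵥ Sig.mulVec dl) := by
    rw [He2]; ring
  have e3 : 2 * (r ⬝ᵥ X.mulVec dl) = lam * (z ⬝ᵥ beta) - lam * (z ⬝ᵥ bhat)
      + 2 * eta * (dl ⬝ᵥ Sig.mulVec bhat) := by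
    rw [hdot]; ring
  have e5 : lam * (z ⬝ᵥ bhat) = lam * norm1 bhat := by rw [He5]
  have He8' : 0 ≤ eta * (dl ⬝ᵥ Sig.mulVec dl) := mul_nonneg heta.le He8
  linarith [He1, e2', e3, e5, key1, He7, He8']
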